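/- arXiv:1004.5036 — 3 statements merged into one kernel-verified Lean document; each statement's English description precedes it below -/
import Mathlib

section
/- Let K be a field, L = K(t) a simple purely transcendental extension, and suppose s ∈ L is transcendental over K with [L : K(s)] finite. If K(s) and K(A) are linearly disjoint over K for some K(s)-linear basis A of L containing 1, then [L : K(s)] = 1, i.e., L = K(s). -/
open IntermediateField

lemma pow_linearIndependent_of_transcendental {R A : Type*} [CommRing R] [CommRing A]
    [Algebra R A] {x : A} (hx : Transcendental R x) :
    LinearIndependent R (fun n : ℕ => x ^ n) := by
  have hinj := transcendental_iff_injective.mp hx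
  have h := ((Polynomial.basisMonomials R).linearIndependent).map'
    (Polynomial.aeval x).toLinearMap (LinearMap.ker_eq_bot.mpr hinj)
  convert h using 1
  rotate_left
  · rfl
  · rfl
  funext n
  simp [Polynomial.coe_basisMonomials]

lemma transcendental_of_pow_linearIndependent {R A : Type*} [CommRing R] [CommRing A]
    [Algebra R A] {x : A} (h : LinearIndependent R (fun n : ℕ => x ^ n)) :
    Transcendental R x := by
  rw [transcendental_iff]
  intro p hp
  have h2 := linearIndependent_iff.mp h p.toFinsupp.coeff ?_
  · ext n
    exact DFunLike.congr_fun h2 n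
  · rw [Finsupp.linearCombination_apply, ← hp, Polynomial.aeval_def, Polynomial.eval₂_eq_sum,
      Polynomial.sum]
    simp [Finsupp.sum, Polynomial.support, Algebra.smul_def]
    rfl

lemma ratFunc_exists_const_of_isAlgebraic (K : Type*) [Field K] {x : RatFunc K}
    (hx : IsAlgebraic K x) : ∃ c : K, algebraMap K (RatFunc K) c = x := by
  have hint : IsIntegral K x := hx.isIntegral
  have h2 : IsIntegral (Polynomial K) x := hint.tower_top
  obtain ⟨p, hp⟩ := IsIntegrallyClosed.isIntegral_iff.mp h2
  have hdeg : p.natDegree = 0 := by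
    by_contra hd
    have htr : Transcendental K p :=
      Polynomial.transcendental p hd (mem_nonZeroDivisors_of_ne_zero
        (Polynomial.leadingCoeff_ne_zero.mpr (fun h => hd (by simp [h]))))
    have : Transcendental K x := by
      rw [← hp]
      exact (transcendental_algebraMap_iff
        (IsFractionRing.injective (Polynomial K) (RatFunc K))).mpr htr
    exact this hx
  obtain ⟨c, rfl⟩ := Polynomial.natDegree_eq_zero.mp hdeg
  exact ⟨c, by rw [← hp, IsScalarTower.algebraMap_apply K (Polynomial K) (RatFunc K)]; simp⟩

/-- Let `L = K(t)` (modelled as `RatFunc K`), `s ∈ L` transcendental over `K`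
with `[L : K(s)]` finite. If `K(s)` and `K(A)` are linearly disjoint over `K` for some
`K(s)`-linear basis `A` of `L` containing `1`, then `L = K(s)`. -/
theorem linearly_disjoint_basis_implies_purely_transcendental
    (K : Type*) [Field K] (s : RatFunc K) (hs : Transcendental K s)
    (hfin : FiniteDimensional (adjoin K {s}) (RatFunc K))
    (A : Set (RatFunc K)) (h1 : (1 : RatFunc K) ∈ A)
    (hspan : Submodule.span (adjoin K {s}) A = ⊤)
    (hli : LinearIndependent (adjoin K {s}) ((↑) : A → RatFunc K))
    (hld : (adjoin K {s}).LinearDisjoint (adjoin K A)) :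
    adjoin K {s} = ⊤ := by
  have hA : ∀ a ∈ A, a ∈ adjoin K {s} := by
    intro a ha
    have halg : IsAlgebraic K a := by
      by_contra htr
      have htr' : Transcendental K a := htr
      set y : adjoin K A := ⟨a, subset_adjoin K A ha⟩ with hy
      have hyt : Transcendental K y :=
        (transcendental_algebraMap_iff (R := K) (S := adjoin K A) (A := RatFunc K)
          (a := y) (Subtype.val_injective)).mp htr'
      have h1' : LinearIndependent K (fun n : ℕ => y ^ n) :=
        pow_linearIndependent_of_transcendental hyt
      have h2 := hld.linearIndependent_right h1'
      have h3 : LinearIndependent (adjoin K {s}) (fun n : ℕ => a ^ n) := by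
        have he : ((adjoin K A).val ∘ fun n : ℕ => y ^ n) = fun n : ℕ => a ^ n := by
          funext n
          simp [hy]
        rw [← he]
        exact h2
      have h4 : Transcendental (adjoin K {s}) a :=
        transcendental_of_pow_linearIndependent h3
      exact h4 (IsIntegral.isAlgebraic (IsIntegral.of_finite (adjoin K {s}) a))
    obtain ⟨c, hc⟩ := ratFunc_exists_const_of_isAlgebraic K halg
    rw [← hc]
    exact (adjoin K {s}).algebraMap_mem c
  rw [eq_top_iff]
  intro x _
  have hx : x ∈ Submodule.span (adjoin K {s}) A := hspan ▸ Submodule.mem_top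
  refine Submodule.span_induction (p := fun z _ => z ∈ adjoin K {s}) hA
    (zero_mem _) (fun u v _ _ hu hv => add_mem hu hv) ?_ hx
  intro c z _ hz
  rw [Algebra.smul_def]
  exact mul_mem (c.2) hz
end

section
/- Let K be a field and L/K a finitely generated field extension. If every conjugation of L over K with respect to some fixed nice basis (Δ, A) is contained in L, then L is quasi-galois over K with respect to (Δ, A): every irreducible polynomial over K(Δ) having a root in L splits completely in L[X]. -/
open IntermediateField

/-- Let `L/K` be finitely generated, realized inside an algebraic closure
`Ω` of `L`, with nice basis transcendence part `Δ ⊆ L` (algebraically independent over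
`K`, with `L` algebraic over `F = K(Δ)`).  If every conjugation of `L` over `K` with
respect to this nice basis (i.e. every image of an `F`-embedding of `L` into `Ω`) is
contained in `L`, then `L` is quasi-galois over `K` with respect to it: every irreducible
polynomial over `K(Δ)` having a root in `L` splits completely in `L[X]`. -/
theorem conjugations_contained_implies_quasi_galois
    (K Ω : Type*) [Field K] [Field Ω] [Algebra K Ω] [IsAlgClosed Ω]
    (L : IntermediateField K Ω) [Algebra.IsAlgebraic L Ω] (hfg : L.FG)
    (Δ : Set Ω) (hΔL : Δ ⊆ (L : Set Ω))
    (hΔ : AlgebraicIndependent K ((↑) : Δ → Ω))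
    (F : IntermediateField K Ω) (hF : F = adjoin K Δ) (hFL : F ≤ L)
    (halg : ∀ x ∈ L, IsAlgebraic F x)
    (hconj : ∀ f : ↥(extendScalars hFL) →ₐ[F] Ω, f.fieldRange ≤ extendScalars hFL)
    (p : Polynomial F) (hirr : Irreducible p)
    (hroot : ∃ x ∈ L, Polynomial.aeval x p = 0) :
    Polynomial.Splits (p.map (algebraMap F ↥(extendScalars hFL))) := by
  set E := extendScalars hFL with hE
  haveI : Algebra.IsAlgebraic F E := by
    constructor
    intro x
    exact isAlgebraic_iff.mpr (halg x x.2)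
  haveI : Algebra.IsAlgebraic ↥E Ω := ‹Algebra.IsAlgebraic ↥L Ω›
  haveI : Module.IsTorsionFree ↥F Ω := DivisionSemiring.to_moduleIsTorsionFree
  haveI : IsAlgClosure ↥F Ω := ⟨‹_›, Algebra.IsAlgebraic.trans ↥F ↥E Ω⟩
  haveI : Normal ↥F Ω := IsAlgClosure.normal ↥F Ω
  haveI hNE : Normal ↥F ↥E := normal_iff_forall_fieldRange_le.2 hconj
  obtain ⟨x, hxL, hx⟩ := hroot
  set y : ↥E := ⟨x, hxL⟩ with hy
  have hyroot : Polynomial.aeval y p = 0 := by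
    apply Subtype.ext
    have : (Polynomial.aeval y p : Ω) = Polynomial.aeval x p := by
      rw [show ((Polynomial.aeval y p : ↥E) : Ω) = E.val (Polynomial.aeval y p) from rfl,
        ← Polynomial.aeval_algHom_apply E.val y p]
      rfl
    simpa [hx] using this
  have hmin : minpoly ↥F y = p * Polynomial.C p.leadingCoeff⁻¹ :=
    (minpoly.eq_of_irreducible hirr hyroot).symm
  have hsplit := hNE.splits y
  rw [hmin] at hsplit
  have hp0 : p ≠ 0 := hirr.ne_zero
  have hc0 : Polynomial.C p.leadingCoeff⁻¹ ≠ 0 := by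
    simp [Polynomial.leadingCoeff_ne_zero.mpr hp0]
  exact hsplit.of_dvd ((Polynomial.map_ne_zero_iff (algebraMap F E).injective).2 (mul_ne_zero hp0 hc0))
    (Polynomial.map_dvd _ (dvd_mul_right p _))
end

section
/- Let K be a field and s, t algebraically independent over K. Then K(s, t) is Galois over K: the fixed field of the group of K-automorphisms of K(s, t) is K. -/
open Polynomial


theorem myIsFractionRing {R K : Type*} [CommRing R] [IsDomain R] [Field K] [Algebra R K]
    (hinj : Function.Injective (algebraMap R K))
    (hsurj : ∀ z : K, ∃ a b : R, b ≠ 0 ∧ z * algebraMap R K b = algebraMap R K a) :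
    IsFractionRing R K where
  map_units := by
    rintro ⟨y, hy⟩
    have hy0 : y ≠ 0 := nonZeroDivisors.ne_zero hy
    rw [isUnit_iff_ne_zero]
    intro h
    exact hy0 (hinj (by simpa using h))
  surj := by
    intro z
    obtain ⟨a, b, hb, h⟩ := hsurj z
    exact ⟨(a, ⟨b, mem_nonZeroDivisors_of_ne_zero hb⟩), h⟩
  exists_of_eq := by
    intro a b h
    exact ⟨1, by rw [hinj h]⟩

theorem taylor_eq_of_dvd {F : Type*} [Field F] {p : F[X]} (hp0 : p ≠ 0) (c : F)
    (hdvd : p ∣ Polynomial.taylor c p) : Polynomial.taylor c p = p := by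
  obtain ⟨d, hd⟩ := hdvd
  have htp0 : Polynomial.taylor c p ≠ 0 := by
    intro h
    have := congrArg (Polynomial.taylor (-c)) h
    rw [Polynomial.taylor_taylor] at this
    simp at this
    exact hp0 this
  have hd0 : d ≠ 0 := by rintro rfl; rw [mul_zero] at hd; exact htp0 hd
  have hdeg : p.natDegree = p.natDegree + d.natDegree := by
    have := Polynomial.natDegree_taylor p c
    rw [hd, Polynomial.natDegree_mul hp0 hd0] at this
    omega
  have hd_deg : d.natDegree = 0 := by omega
  obtain ⟨a, rfl⟩ : ∃ a, d = Polynomial.C a := ⟨d.coeff 0, Polynomial.eq_C_of_natDegree_eq_zero hd_deg⟩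
  have hlc : (Polynomial.taylor c p).leadingCoeff = p.leadingCoeff := by
    rw [Polynomial.taylor_apply, Polynomial.leadingCoeff_comp (by
      rw [Polynomial.natDegree_X_add_C]; exact one_ne_zero)]
    simp [Polynomial.leadingCoeff_X_add_C]
  have ha : a = 1 := by
    have h2 : p.leadingCoeff = p.leadingCoeff * a := by
      conv_lhs => rw [← hlc, hd]
      simp [Polynomial.leadingCoeff_mul]
    have := Polynomial.leadingCoeff_ne_zero.mpr hp0
    field_simp at h2
    tauto
  rw [hd, ha]; simp

theorem one_var_core {F L : Type*} [Field F] [Infinite F] [Field L] [Algebra F L]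
    (t : L) (htr : Transcendental F t)
    (hgen : IntermediateField.adjoin F {t} = ⊤)
    (x : L) (hfix : ∀ σ : L ≃ₐ[F] L, σ x = x) :
    x ∈ Set.range (algebraMap F L) := by
  classical
  have hinj : Function.Injective (Polynomial.aeval (R := F) t) :=
    transcendental_iff_injective.mp htr
  by_cases hx0 : x = 0
  · exact ⟨0, by simp [hx0]⟩
  letI : Algebra F[X] L := (Polynomial.aeval t).toAlgebra
  have halg : ∀ u : F[X], algebraMap F[X] L u = Polynomial.aeval t u := fun _ => rfl
  haveI : IsScalarTower F F[X] L := IsScalarTower.of_algebraMap_eq fun a => by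
    rw [halg]; simp
  have hmem : ∀ z : L, ∃ r w : F[X], z = Polynomial.aeval t r / Polynomial.aeval t w := by
    intro z
    have hz : z ∈ IntermediateField.adjoin F {t} := hgen ▸ IntermediateField.mem_top
    exact (IntermediateField.mem_adjoin_simple_iff F z).mp hz
  haveI : IsFractionRing F[X] L := myIsFractionRing (fun a b h => hinj ((halg a).symm.trans (h.trans (halg b)))) (by
    intro z
    obtain ⟨r, w, hz⟩ := hmem z
    by_cases hw : Polynomial.aeval t w = 0
    · exact ⟨0, 1, one_ne_zero, by simp only [halg]; simp [hz, hw]⟩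
    · refine ⟨r, w, fun h => hw (by rw [← halg, h, halg]; simp), ?_⟩
      rw [halg, halg, hz, div_mul_cancel₀ _ hw])
  obtain ⟨r, w, hx_eq⟩ := hmem x
  have hwa : Polynomial.aeval t w ≠ 0 := by intro h; exact hx0 (by rw [hx_eq, h, div_zero])
  have hra : Polynomial.aeval t r ≠ 0 := by intro h; exact hx0 (by rw [hx_eq, h, zero_div])
  have hw0 : w ≠ 0 := fun h => hwa (by simp [h])
  have hr0 : r ≠ 0 := fun h => hra (by simp [h])
  set g := GCDMonoid.gcd r w with hgdef
  have hg0 : g ≠ 0 := gcd_ne_zero_of_right hw0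
  set p := r / g with hpdef
  set q := w / g with hqdef
  have hp0 : p ≠ 0 := left_div_gcd_ne_zero hr0
  have hq0 : q ≠ 0 := right_div_gcd_ne_zero hw0
  have hcop : IsCoprime p q := isCoprime_div_gcd_div_gcd hw0
  have hr : g * p = r := EuclideanDomain.mul_div_cancel' hg0 (gcd_dvd_left r w)
  have hw' : g * q = w := EuclideanDomain.mul_div_cancel' hg0 (gcd_dvd_right r w)
  have hqa : Polynomial.aeval t q ≠ 0 := fun h => hwa (by rw [← hw', map_mul, h, mul_zero])
  have hga : Polynomial.aeval t g ≠ 0 := fun h => hwa (by rw [← hw', map_mul, h, zero_mul])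
  have hpa : Polynomial.aeval t p ≠ 0 := fun h => hra (by rw [← hr, map_mul, h, mul_zero])
  have hx_eq' : x * Polynomial.aeval t q = Polynomial.aeval t p := by
    rw [hx_eq, ← hr, ← hw', map_mul, map_mul]
    field_simp
  have main : ∀ c : F, Polynomial.taylor c p * q = p * Polynomial.taylor c q := by
    intro c
    set σ : L ≃ₐ[F] L :=
      IsFractionRing.algEquivOfAlgEquiv (K := L) (L := L) (Polynomial.algEquivAevalXAddC c) with hσdef
    have hσ : ∀ u : F[X], σ (Polynomial.aeval t u) = Polynomial.aeval t (Polynomial.taylor c u) := by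
      intro u
      have h1 := IsFractionRing.algEquivOfAlgEquiv_algebraMap
        (K := L) (L := L) (Polynomial.algEquivAevalXAddC c) u
      rw [halg, halg] at h1
      rw [hσdef, h1, Polynomial.taylor_apply, Polynomial.algEquivAevalXAddC_apply,
        Polynomial.comp_eq_aeval]
    have h1 := congrArg σ hx_eq'
    rw [map_mul, hfix σ, hσ, hσ] at h1
    apply hinj
    rw [map_mul, map_mul]
    calc Polynomial.aeval t (Polynomial.taylor c p) * Polynomial.aeval t q
        = x * Polynomial.aeval t (Polynomial.taylor c q) * Polynomial.aeval t q := by rw [h1]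
      _ = (x * Polynomial.aeval t q) * Polynomial.aeval t (Polynomial.taylor c q) := by ring
      _ = Polynomial.aeval t p * Polynomial.aeval t (Polynomial.taylor c q) := by rw [hx_eq']
  have htp : ∀ c : F, Polynomial.taylor c p = p := by
    intro c
    refine taylor_eq_of_dvd hp0 c (hcop.dvd_of_dvd_mul_right ⟨_, main c⟩)
  have htq : ∀ c : F, Polynomial.taylor c q = q := by
    intro c
    refine taylor_eq_of_dvd hq0 c (hcop.symm.dvd_of_dvd_mul_left ⟨Polynomial.taylor c p, ?_⟩)
    rw [← main c]; ring
  have hpc : p = Polynomial.C (p.coeff 0) := by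
    apply Polynomial.funext
    intro c
    rw [Polynomial.eval_C, ← Polynomial.taylor_coeff_zero c p, htp c]
  have hqc : q = Polynomial.C (q.coeff 0) := by
    apply Polynomial.funext
    intro c
    rw [Polynomial.eval_C, ← Polynomial.taylor_coeff_zero c q, htq c]
  have hb0 : q.coeff 0 ≠ 0 := fun h => hq0 (by rw [hqc, h, map_zero])
  refine ⟨p.coeff 0 / q.coeff 0, ?_⟩
  have hx2 : x = Polynomial.aeval t p / Polynomial.aeval t q := by
    rw [eq_div_iff hqa]; exact hx_eq'
  rw [map_div₀, hx2]
  conv_rhs => rw [hpc, hqc]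
  rw [Polynomial.aeval_C, Polynomial.aeval_C]

theorem trans_aux {K L : Type*} [Field K] [Field L] [Algebra K L]
    (s t : L) (hst : AlgebraicIndependent K ![s, t]) :
    Transcendental (IntermediateField.adjoin K ({s} : Set L)) t := by
  classical
  have hs_tr : Transcendental K s := by simpa using hst.transcendental 0
  have ai1 : AlgebraicIndependent K ![s] := algebraicIndependent_iff_transcendental.mpr hs_tr
  have einj : Function.Injective (fun o : Option (Fin 1) => o.elim (1 : Fin 2) (fun _ => 0)) := by
    decide
  have hcomp : (![s, t] ∘ fun o : Option (Fin 1) => o.elim (1 : Fin 2) (fun _ => 0))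
      = fun o : Option (Fin 1) => o.elim t ![s] := by
    funext o
    cases o with
    | none => rfl
    | some i =>
      have : i = 0 := Subsingleton.elim i 0
      subst this
      rfl
  have h2 : AlgebraicIndependent K (fun o : Option (Fin 1) => o.elim t ![s]) := by
    rw [← hcomp]; exact hst.comp _ einj
  have htA : Transcendental (Algebra.adjoin K (Set.range ![s])) t := (ai1.option_iff_transcendental t).mp h2
  have hrange : Set.range ![s] = ({s} : Set L) := by
    ext y
    simp [Matrix.range_cons, Matrix.range_empty]
  rw [hrange] at htA
  set A := Algebra.adjoin K ({s} : Set L) with hA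
  set F := IntermediateField.adjoin K ({s} : Set L) with hF
  letI : Algebra A F :=
    (Subalgebra.inclusion (IntermediateField.algebra_adjoin_le_adjoin K {s})).toRingHom.toAlgebra
  haveI : IsScalarTower A F L := IsScalarTower.of_algebraMap_eq (congrFun rfl)
  have memA : ∀ u : Polynomial K, Polynomial.aeval s u ∈ A := by
    intro u
    rw [hA, Algebra.adjoin_singleton_eq_range_aeval]
    exact ⟨u, rfl⟩
  haveI : IsFractionRing A F := by
    apply myIsFractionRing
    · intro a b h
      exact Subalgebra.inclusion_injective (IntermediateField.algebra_adjoin_le_adjoin K {s}) h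
    · intro z
      obtain ⟨r, w, hz⟩ := (IntermediateField.mem_adjoin_simple_iff K (z : L)).mp z.2
      by_cases hw : Polynomial.aeval s w = 0
      · refine ⟨0, 1, one_ne_zero, ?_⟩
        apply Subtype.ext
        push_cast
        rw [mul_one, hz, hw, div_zero]
      · refine ⟨⟨_, memA r⟩, ⟨_, memA w⟩, ?_, ?_⟩
        · intro h
          exact hw (congrArg Subtype.val h)
        · apply Subtype.ext
          show (z : L) * Polynomial.aeval s w = Polynomial.aeval s r
          rw [hz, div_mul_cancel₀ _ hw]
  intro halg
  exact htA ((IsFractionRing.isAlgebraic_iff A F L).mpr halg)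

theorem aux_mem_adjoin {K L : Type*} [Field K] [Field L] [Algebra K L]
    (s t : L) (hst : AlgebraicIndependent K ![s, t])
    (hgen : IntermediateField.adjoin K ({s, t} : Set L) = ⊤)
    (x : L) (hx : ∀ σ : L ≃ₐ[K] L, σ x = x) :
    x ∈ IntermediateField.adjoin K ({s} : Set L) := by
  classical
  have hs_tr : Transcendental K s := by simpa using hst.transcendental 0
  set F := IntermediateField.adjoin K ({s} : Set L) with hF
  have hsF : s ∈ F := IntermediateField.mem_adjoin_simple_self K s
  -- F is infinite
  haveI : Infinite F := by
    have hinj : Function.Injective (fun u : Polynomial K => (⟨Polynomial.aeval s u,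
        IntermediateField.algebra_adjoin_le_adjoin K {s}
          (by rw [Algebra.adjoin_singleton_eq_range_aeval]; exact ⟨u, rfl⟩)⟩ : F)) := by
      intro a b h
      have h2 : Polynomial.aeval s a = Polynomial.aeval s b := congrArg Subtype.val h
      exact transcendental_iff_injective.mp hs_tr h2
    exact Infinite.of_injective _ hinj
  have htr : Transcendental F t := trans_aux s t hst
  have hFtop : IntermediateField.adjoin F ({t} : Set L) = ⊤ := by
    apply IntermediateField.restrictScalars_injective K
    rw [IntermediateField.restrictScalars_top, hF, IntermediateField.adjoin_adjoin_left,
      Set.singleton_union, hgen]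
  have hfixF : ∀ σ : L ≃ₐ[F] L, σ x = x := fun σ => hx (σ.restrictScalars K)
  obtain ⟨y, hy⟩ := one_var_core t htr hFtop x hfixF
  rw [← hy]
  exact y.2


/-- If `s, t` are algebraically independent over `K` and generate `L = K(s,t)`,
then `L` is Galois over `K` in the transcendental sense: the fixed field of the group of
`K`-automorphisms of `K(s,t)` is `K`. -/
theorem two_variable_rational_function_field_galois
    (K L : Type*) [Field K] [Field L] [Algebra K L]
    (s t : L) (hst : AlgebraicIndependent K ![s, t])
    (hgen : IntermediateField.adjoin K ({s, t} : Set L) = ⊤)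
    (x : L) (hx : ∀ σ : L ≃ₐ[K] L, σ x = x) :
    x ∈ Set.range (algebraMap K L) := by
  classical
  have h1 : x ∈ IntermediateField.adjoin K ({s} : Set L) := aux_mem_adjoin s t hst hgen x hx
  have hswap : AlgebraicIndependent K ![t, s] := by
    have hcomp : ![s, t] ∘ (![1, 0] : Fin 2 → Fin 2) = ![t, s] := by
      funext i; fin_cases i <;> rfl
    have := hst.comp (![1, 0] : Fin 2 → Fin 2) (by decide)
    rwa [hcomp] at this
  have hgen' : IntermediateField.adjoin K ({t, s} : Set L) = ⊤ := by rwa [Set.pair_comm]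
  have h2 : x ∈ IntermediateField.adjoin K ({t} : Set L) := aux_mem_adjoin t s hswap hgen' x hx
  by_cases hx0 : x = 0
  · exact ⟨0, by simp [hx0]⟩
  obtain ⟨r, w, hx_eq⟩ := (IntermediateField.mem_adjoin_simple_iff K x).mp h2
  have hwa : Polynomial.aeval t w ≠ 0 := by
    intro h; exact hx0 (by rw [hx_eq, h, div_zero])
  have hw0 : w ≠ 0 := fun h => hwa (by simp [h])
  have hx_eq' : x * Polynomial.aeval t w = Polynomial.aeval t r := by
    rw [hx_eq, div_mul_cancel₀ _ hwa]
  by_cases hP : r.map (algebraMap K L) = Polynomial.C x * w.map (algebraMap K L)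
  · have hex : ∃ i, w.coeff i ≠ 0 := by
      by_contra h
      push_neg at h
      exact hw0 (Polynomial.ext fun n => by rw [h n, Polynomial.coeff_zero])
    obtain ⟨i, hi⟩ := hex
    have hco := congrArg (fun P => Polynomial.coeff P i) hP
    simp only [Polynomial.coeff_map, Polynomial.coeff_C_mul] at hco
    have hwb : algebraMap K L (w.coeff i) ≠ 0 := fun h =>
      hi ((algebraMap K L).injective (by rw [h, map_zero]))
    refine ⟨r.coeff i / w.coeff i, ?_⟩
    rw [map_div₀, hco, mul_div_assoc, div_self hwb, mul_one]
  · exfalso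
    have htr : Transcendental (IntermediateField.adjoin K ({s} : Set L)) t := trans_aux s t hst
    set F := IntermediateField.adjoin K ({s} : Set L) with hF
    set xF : F := ⟨x, h1⟩ with hxF
    set P : Polynomial F := r.map (algebraMap K F) - Polynomial.C xF * w.map (algebraMap K F)
      with hPdef
    have hmap : P.map (algebraMap F L)
        = r.map (algebraMap K L) - Polynomial.C x * w.map (algebraMap K L) := by
      rw [hPdef, Polynomial.map_sub, Polynomial.map_mul, Polynomial.map_C,
        Polynomial.map_map, Polynomial.map_map, ← IsScalarTower.algebraMap_eq]
      rfl
    have hP0 : P ≠ 0 := by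
      intro h
      apply hP
      have := congrArg (Polynomial.map (algebraMap F L)) h
      rw [hmap, Polynomial.map_zero, sub_eq_zero] at this
      exact this
    have e1 : ∀ u : Polynomial K, Polynomial.eval t (u.map (algebraMap K L))
        = Polynomial.aeval t u := fun u => by
      rw [Polynomial.aeval_def, Polynomial.eval₂_eq_eval_map]
    have hval : Polynomial.aeval t P = 0 := by
      rw [Polynomial.aeval_def, Polynomial.eval₂_eq_eval_map, hmap]
      rw [Polynomial.eval_sub, Polynomial.eval_mul, Polynomial.eval_C, e1, e1, hx_eq', sub_self]
    exact htr ⟨P, hP0, hval⟩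
end
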